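/- Let T be an n×n contraction whose minimal polynomial is (z - λ)^n for some λ ∈ (-1,1). The analytic Toeplitz matrix T* with diagonal λ, first subdiagonal 1-λ², and k-th subdiagonal (-λ)^{k-1}(1-λ²) for k ≥ 1, has spectral norm at most 1 (i.e., T* is a contraction) and its only eigenvalue is λ with minimal polynomial (z-λ)^n. -/

import Mathlib

open scoped Matrix.Norms.L2Operator
open Matrix Polynomial


noncomputable def Tstar (n : ℕ) (lam : ℝ) : Matrix (Fin n) (Fin n) ℝ :=
  Matrix.of fun i j =>
    if (i : ℕ) < (j : ℕ) then 0
    else if i = j then lam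
    else (-lam) ^ ((i : ℕ) - (j : ℕ) - 1) * (1 - lam ^ 2)

noncomputable def Sh (n : ℕ) : Matrix (Fin n) (Fin n) ℝ :=
  Matrix.of fun i j => if (i : ℕ) = (j : ℕ) + 1 then 1 else 0

lemma Tstar_lt {n : ℕ} {lam : ℝ} {i j : Fin n} (h : (i:ℕ) < (j:ℕ)) :
    Tstar n lam i j = 0 := by
  simp only [Tstar, Matrix.of_apply]; rw [if_pos h]

lemma Tstar_eq {n : ℕ} {lam : ℝ} {i j : Fin n} (h : (i:ℕ) = (j:ℕ)) :
    Tstar n lam i j = lam := by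
  simp only [Tstar, Matrix.of_apply]; rw [if_neg (by omega), if_pos (Fin.ext h)]

lemma Tstar_gt {n : ℕ} {lam : ℝ} {i j : Fin n} (h : (j:ℕ) < (i:ℕ)) :
    Tstar n lam i j = (-lam) ^ ((i : ℕ) - (j : ℕ) - 1) * (1 - lam ^ 2) := by
  have h1 : ¬ ((i:ℕ) < (j:ℕ)) := by omega
  have h2 : ¬ (i = j) := fun e => absurd (congrArg Fin.val e) (by omega)
  simp only [Tstar, Matrix.of_apply]; rw [if_neg h1, if_neg h2]

lemma mul_Sh {n : ℕ} (A : Matrix (Fin n) (Fin n) ℝ) (i j : Fin n) :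
    (A * Sh n) i j = if h : (j : ℕ) + 1 < n then A i ⟨(j : ℕ) + 1, h⟩ else 0 := by
  rw [Matrix.mul_apply]
  split_ifs with h
  · rw [Finset.sum_eq_single (⟨(j : ℕ) + 1, h⟩ : Fin n)]
    · simp [Sh]
    · intro k _ hk
      simp only [Sh, Matrix.of_apply]
      rw [if_neg, mul_zero]
      intro hkj; apply hk; exact Fin.ext hkj
    · simp
  · apply Finset.sum_eq_zero
    intro k _
    simp only [Sh, Matrix.of_apply]
    rw [if_neg, mul_zero]
    intro hkj; exact h (hkj ▸ k.isLt)

lemma Sh_mul {n : ℕ} (A : Matrix (Fin n) (Fin n) ℝ) (i j : Fin n) :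
    (Sh n * A) i j = if h : 0 < (i : ℕ) then A ⟨(i : ℕ) - 1, by omega⟩ j else 0 := by
  rw [Matrix.mul_apply]
  split_ifs with h
  · rw [Finset.sum_eq_single (⟨(i : ℕ) - 1, by omega⟩ : Fin n)]
    · simp only [Sh, Matrix.of_apply]
      rw [if_pos (by omega), one_mul]
    · intro k _ hk
      simp only [Sh, Matrix.of_apply]
      rw [if_neg, zero_mul]
      intro hkj; apply hk; apply Fin.ext; simp only [Fin.val_mk]; omega
    · simp
  · apply Finset.sum_eq_zero
    intro k _
    simp only [Sh, Matrix.of_apply]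
    rw [if_neg (by omega), zero_mul]

lemma key1 (n : ℕ) (lam : ℝ) :
    Tstar n lam * (1 + lam • Sh n) = lam • 1 + Sh n := by
  ext i j
  rw [Matrix.mul_add, Matrix.mul_one, Matrix.mul_smul, Matrix.add_apply, Matrix.add_apply,
    Matrix.smul_apply, Matrix.smul_apply, mul_Sh, smul_eq_mul, smul_eq_mul]
  have hSh : Sh n i j = if (i : ℕ) = (j : ℕ) + 1 then 1 else 0 := rfl
  rw [hSh, Matrix.one_apply]
  by_cases h : (j : ℕ) + 1 < n
  · rw [dif_pos h]
    rcases Nat.lt_trichotomy (i:ℕ) (j:ℕ) with h1 | h1 | h1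
    · rw [Tstar_lt h1, Tstar_lt (by simp only [Fin.val_mk]; omega),
        if_neg (by simp [Fin.ext_iff]; omega), if_neg (by omega)]
      ring
    · rw [Tstar_eq h1, Tstar_lt (by simp only [Fin.val_mk]; omega),
        if_pos (Fin.ext h1), if_neg (by omega)]
      ring
    · rcases Nat.lt_or_ge (j:ℕ) ((i:ℕ) - 1) with h2 | h2
      · -- i > j + 1
        rw [Tstar_gt h1, Tstar_gt (by simp only [Fin.val_mk]; omega),
          if_neg (by simp [Fin.ext_iff]; omega), if_neg (by omega)]
        simp only [Fin.val_mk]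
        have e1 : (i:ℕ) - (j:ℕ) - 1 = ((i:ℕ) - ((j:ℕ)+1) - 1) + 1 := by omega
        rw [e1, pow_succ]
        ring
      · -- i = j + 1
        have h3 : (i:ℕ) = (j:ℕ) + 1 := by omega
        rw [Tstar_gt h1, Tstar_eq (by simp only [Fin.val_mk]; omega),
          if_neg (by simp [Fin.ext_iff]; omega), if_pos h3]
        have e1 : (i:ℕ) - (j:ℕ) - 1 = 0 := by omega
        rw [e1, pow_zero]
        ring
  · rw [dif_neg h]
    have hj : (i:ℕ) ≤ (j:ℕ) := by have := i.isLt; omega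
    rcases Nat.lt_or_ge (i:ℕ) (j:ℕ) with h1 | h1
    · rw [Tstar_lt h1, if_neg (by simp [Fin.ext_iff]; omega), if_neg (by omega)]
      ring
    · have h2 : (i:ℕ) = (j:ℕ) := by omega
      rw [Tstar_eq h2, if_pos (Fin.ext h2), if_neg (by omega)]
      ring

lemma key_comm (n : ℕ) (lam : ℝ) : Tstar n lam * Sh n = Sh n * Tstar n lam := by
  ext i j
  rw [mul_Sh, Sh_mul]
  by_cases h : (j : ℕ) + 1 < n <;> by_cases h' : 0 < (i : ℕ)
  · rw [dif_pos h, dif_pos h']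
    rcases Nat.lt_trichotomy (i:ℕ) ((j:ℕ)+1) with h1 | h1 | h1
    · rw [Tstar_lt (by simp only [Fin.val_mk]; omega), Tstar_lt (by simp only [Fin.val_mk]; omega)]
    · rw [Tstar_eq (by simp only [Fin.val_mk]; omega), Tstar_eq (by simp only [Fin.val_mk]; omega)]
    · rw [Tstar_gt (by simp only [Fin.val_mk]; omega), Tstar_gt (by simp only [Fin.val_mk]; omega)]
      simp only [Fin.val_mk]
      congr 1
      congr 1
      omega
  · rw [dif_pos h, dif_neg h']
    exact Tstar_lt (by simp only [Fin.val_mk]; omega)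
  · rw [dif_neg h, dif_pos h']
    rw [Tstar_lt (by simp only [Fin.val_mk]; have := i.isLt; omega)]
  · rw [dif_neg h, dif_neg h']

lemma Sh_mulVec {n : ℕ} (y : Fin n → ℝ) (i : Fin n) :
    (Sh n *ᵥ y) i = if h : 0 < (i : ℕ) then y ⟨(i : ℕ) - 1, by omega⟩ else 0 := by
  rw [Matrix.mulVec, dotProduct]
  split_ifs with h
  · rw [Finset.sum_eq_single (⟨(i : ℕ) - 1, by omega⟩ : Fin n)]
    · simp only [Sh, Matrix.of_apply]
      rw [if_pos (by omega), one_mul]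
    · intro k _ hk
      simp only [Sh, Matrix.of_apply]
      rw [if_neg, zero_mul]
      intro hkj; apply hk; apply Fin.ext; simp only [Fin.val_mk]; omega
    · simp
  · apply Finset.sum_eq_zero
    intro k _
    simp only [Sh, Matrix.of_apply]
    rw [if_neg (by omega), zero_mul]


lemma Sh_pow {n : ℕ} (k : ℕ) (i j : Fin n) :
    (Sh n ^ k) i j = if (i : ℕ) = (j : ℕ) + k then 1 else 0 := by
  induction k generalizing j with
  | zero => simp [Matrix.one_apply, Fin.ext_iff]
  | succ k ih =>
      rw [pow_succ, mul_Sh]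
      by_cases h : (j : ℕ) + 1 < n
      · rw [dif_pos h, ih]
        simp only [Fin.val_mk]
        split_ifs with h1 h2 h2
        · rfl
        · omega
        · omega
        · rfl
      · rw [dif_neg h, if_neg (by omega)]

lemma Sh_nilpotent (n : ℕ) : Sh n ^ n = 0 := by
  ext i j
  rw [Sh_pow, if_neg (by have := i.isLt; omega)]
  rfl

section main
variable {n : ℕ} (hn : 1 ≤ n) {lam : ℝ} (hlam : -1 < lam) (hlam' : lam < 1)
variable (T : Matrix (Fin n) (Fin n) ℝ)
variable (key1 : T * (1 + lam • Sh n) = lam • 1 + Sh n)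
variable (key_comm : T * Sh n = Sh n * T)

include hn hlam hlam' key1 key_comm

theorem part2 :
    minpoly ℝ T = (Polynomial.X - Polynomial.C lam) ^ n ∧
    spectrum ℝ T = {lam} := by
  have hsq : 1 - lam ^ 2 > 0 := by nlinarith
  set D := T - lam • 1 with hD
  set U := (1 : Matrix (Fin n) (Fin n) ℝ) + lam • Sh n with hU
  have hc : Commute T (Sh n) := key_comm
  have hcomm : Commute D U :=
    (((Commute.one_right T).add_right (hc.smul_right lam)).sub_left
      (((Commute.one_left _).smul_left lam)))
  have hDU : D * U = (1 - lam ^ 2) • Sh n := by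
    rw [hD, sub_mul, key1, hU, Matrix.smul_mul, mul_add, mul_one, Matrix.mul_smul,
      one_mul]
    rw [smul_add, smul_smul]
    module
  have hDUn : ∀ m, D ^ m * U ^ m = ((1 - lam ^ 2) ^ m) • Sh n ^ m := by
    intro m
    rw [← hcomm.mul_pow, hDU, _root_.smul_pow]
  have hUunit : IsUnit U :=
    IsNilpotent.isUnit_one_add ⟨n, by rw [_root_.smul_pow, Sh_nilpotent, smul_zero]⟩
  have hDn : D ^ n = 0 := by
    have h := hDUn n
    rw [Sh_nilpotent, smul_zero] at h
    exact ((hUunit.pow n).mul_left_eq_zero).mp h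
  have hD1 : D ^ (n - 1) ≠ 0 := by
    intro h
    have h2 := hDUn (n - 1)
    rw [h, zero_mul] at h2
    have h3 := congrFun (congrFun h2.symm ⟨n - 1, by omega⟩) ⟨0, by omega⟩
    rw [Matrix.smul_apply, Sh_pow, if_pos (by simp), smul_eq_mul, mul_one] at h3
    have : (0:ℝ) < (1 - lam ^ 2) ^ (n - 1) := pow_pos hsq _
    rw [Matrix.zero_apply] at h3
    linarith
  have h0 : (Polynomial.aeval T) ((X - C lam) ^ n) = 0 := by
    rw [map_pow, map_sub, aeval_X, aeval_C, Algebra.algebraMap_eq_smul_one]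
    exact hDn
  have hint : IsIntegral ℝ T := ⟨_, (monic_X_sub_C lam).pow n, h0⟩
  have hdvd := minpoly.dvd ℝ T h0
  obtain ⟨i, hin, hassoc⟩ := (dvd_prime_pow (Polynomial.prime_X_sub_C lam) n).mp hdvd
  have heq : minpoly ℝ T = (X - C lam) ^ i :=
    Polynomial.eq_of_monic_of_associated (minpoly.monic hint) ((monic_X_sub_C lam).pow i) hassoc
  have hi : i = n := by
    by_contra hne
    have hilt : i < n := lt_of_le_of_ne hin hne
    have hz := minpoly.aeval ℝ T
    rw [heq, map_pow, map_sub, aeval_X, aeval_C, Algebra.algebraMap_eq_smul_one] at hz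
    have : D ^ (n - 1) = 0 := by
      have : D ^ (n - 1) = D ^ i * D ^ (n - 1 - i) := by
        rw [← pow_add]
        congr 1
        omega
      rw [this, hz, zero_mul]
    exact hD1 this
  have hmem : lam ∈ spectrum ℝ T := by
    rw [spectrum.mem_iff]
    intro hu
    have he : (algebraMap ℝ (Matrix (Fin n) (Fin n) ℝ)) lam - T = -D := by
      rw [Algebra.algebraMap_eq_smul_one, hD]; module
    rw [he] at hu
    have hu2 : IsUnit (D ^ n) := ((by simpa using hu.neg : IsUnit D).pow n)
    rw [hDn] at hu2
    have h01 : (0 : Matrix (Fin n) (Fin n) ℝ) = 1 := isUnit_zero_iff.mp hu2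
    apply hD1
    calc D ^ (n-1) = D ^ (n-1) * 1 := (mul_one _).symm
      _ = D ^ (n-1) * 0 := by rw [h01]
      _ = 0 := mul_zero _
  constructor
  · rw [heq, hi]
  · ext μ
    rw [spectrum.mem_iff, Set.mem_singleton_iff]
    constructor
    · intro hmu
      by_contra hne
      apply hmu
      have : (algebraMap ℝ (Matrix (Fin n) (Fin n) ℝ)) μ - T = (-D) + (μ - lam) • 1 := by
        rw [Algebra.algebraMap_eq_smul_one, hD]
        module
      rw [this]
      have hnil : IsNilpotent (-D) := (IsNilpotent.neg ⟨n, hDn⟩)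
      have hu : IsUnit ((μ - lam) • (1 : Matrix (Fin n) (Fin n) ℝ)) := by
        rw [← Algebra.algebraMap_eq_smul_one]
        exact (isUnit_iff_ne_zero.mpr (sub_ne_zero.mpr hne)).map (algebraMap ℝ _)
      exact hnil.isUnit_add_right_of_commute hu ((Commute.one_right (-D)).smul_right _)
    · rintro rfl
      exact spectrum.mem_iff.mp hmem

end main

lemma shift_sq_le {n : ℕ} (y : Fin n → ℝ) :
    ∑ i, ((Sh n *ᵥ y) i) ^ 2 ≤ ∑ i, (y i) ^ 2 := by
  cases n with
  | zero => simp
  | succ m =>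
    rw [Fin.sum_univ_succ, Fin.sum_univ_castSucc (f := fun i => (y i)^2)]
    have h0 : (Sh (m+1) *ᵥ y) 0 = 0 := by
      rw [Sh_mulVec]; exact dif_neg (by simp)
    have hs : ∀ i : Fin m, (Sh (m+1) *ᵥ y) i.succ = y i.castSucc := by
      intro i
      rw [Sh_mulVec, dif_pos (by simp)]
      congr 1
    rw [h0]
    calc (0:ℝ)^2 + ∑ i : Fin m, ((Sh (m+1) *ᵥ y) i.succ)^2
        = ∑ i : Fin m, (y i.castSucc)^2 := by
          rw [Finset.sum_congr rfl (fun i _ => by rw [hs])]; ring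
      _ ≤ ∑ i : Fin m, (y i.castSucc)^2 + (y (Fin.last m))^2 := by nlinarith [sq_nonneg (y (Fin.last m))]

lemma sum_sq_le {n : ℕ} {lam : ℝ} (hlam : -1 < lam) (hlam' : lam < 1) (y : Fin n → ℝ) :
    ∑ i, (((lam • 1 + Sh n) *ᵥ y) i) ^ 2 ≤ ∑ i, (((1 + lam • Sh n) *ᵥ y) i) ^ 2 := by
  have hb := shift_sq_le y
  set b := Sh n *ᵥ y with hbdef
  have e1 : (lam • 1 + Sh n) *ᵥ y = fun i => lam * y i + b i := by
    funext i
    rw [Matrix.add_mulVec, Matrix.smul_mulVec, Matrix.one_mulVec]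
    rfl
  have e2 : (1 + lam • Sh n) *ᵥ y = fun i => y i + lam * b i := by
    funext i
    rw [Matrix.add_mulVec, Matrix.smul_mulVec, Matrix.one_mulVec]
    rfl
  rw [e1, e2]
  have key : ∑ i, (y i + lam * b i)^2 - ∑ i, (lam * y i + b i)^2
      = (1 - lam^2) * (∑ i, (y i)^2 - ∑ i, (b i)^2) := by
    rw [← Finset.sum_sub_distrib, mul_sub, Finset.mul_sum, Finset.mul_sum,
      ← Finset.sum_sub_distrib]
    exact Finset.sum_congr rfl (fun i _ => by ring)
  have hsq : (0:ℝ) ≤ 1 - lam^2 := by nlinarith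
  nlinarith [mul_nonneg hsq (sub_nonneg.mpr hb)]

set_option maxHeartbeats 1000000 in
theorem part1 {n : ℕ} {lam : ℝ} (hlam : -1 < lam) (hlam' : lam < 1)
    (T : Matrix (Fin n) (Fin n) ℝ)
    (key1 : T * (1 + lam • Sh n) = lam • 1 + Sh n) : ‖T‖ ≤ 1 := by
  set U := (1 : Matrix (Fin n) (Fin n) ℝ) + lam • Sh n with hU
  have hUunit : IsUnit U :=
    IsNilpotent.isUnit_one_add ⟨n, by rw [_root_.smul_pow, Sh_nilpotent, smul_zero]⟩
  have hUdet : IsUnit U.det := (Matrix.isUnit_iff_isUnit_det U).mp hUunit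
  rw [Matrix.l2_opNorm_def]
  apply ContinuousLinearMap.opNorm_le_bound _ zero_le_one
  intro x
  rw [one_mul]
  set y : Fin n → ℝ := U⁻¹ *ᵥ (WithLp.equiv 2 (Fin n → ℝ) x) with hy
  have hx : (WithLp.equiv 2 (Fin n → ℝ) x) = U *ᵥ y := by
    rw [hy, Matrix.mulVec_mulVec, Matrix.mul_nonsing_inv _ hUdet, Matrix.one_mulVec]
  have hTx : T *ᵥ (WithLp.equiv 2 (Fin n → ℝ) x) = (lam • 1 + Sh n) *ᵥ y := by
    rw [hx, Matrix.mulVec_mulVec, key1]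
  have happ : ∀ i, (LinearEquiv.trans Matrix.toEuclideanLin
      LinearMap.toContinuousLinearMap T) x i = (T *ᵥ (WithLp.equiv 2 (Fin n → ℝ) x)) i :=
    fun _ => rfl
  rw [EuclideanSpace.norm_eq, EuclideanSpace.norm_eq]
  apply Real.sqrt_le_sqrt
  calc ∑ i, ‖(LinearEquiv.trans Matrix.toEuclideanLin
        LinearMap.toContinuousLinearMap T) x i‖ ^ 2
      = ∑ i, (((lam • 1 + Sh n) *ᵥ y) i) ^ 2 := by
        refine Finset.sum_congr rfl (fun i _ => ?_)
        rw [happ, hTx, Real.norm_eq_abs, sq_abs]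
    _ ≤ ∑ i, ((U *ᵥ y) i) ^ 2 := sum_sq_le hlam hlam' y
    _ = ∑ i, ‖x i‖ ^ 2 := by
        refine Finset.sum_congr rfl (fun i _ => ?_)
        rw [← hx, Real.norm_eq_abs, sq_abs]
        rfl


/-- The model Toeplitz matrix `T*` is a contraction whose minimal polynomial is
`(z - λ)^n` (so its only eigenvalue is `λ`). -/
theorem stmt11 (n : ℕ) (hn : 1 ≤ n) (lam : ℝ) (hlam : -1 < lam) (hlam' : lam < 1) :
    ‖Tstar n lam‖ ≤ 1 ∧
    minpoly ℝ (Tstar n lam) = (Polynomial.X - Polynomial.C lam) ^ n ∧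
    spectrum ℝ (Tstar n lam) = {lam} := by
  have h2 := part2 hn hlam hlam' (Tstar n lam) (key1 n lam) (key_comm n lam)
  exact ⟨part1 hlam hlam' (Tstar n lam) (key1 n lam), h2.1, h2.2⟩
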